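/- For any instance with exactly 2 agents whose true valuations are additive, and any bid profile (b_1, b_2) in which agent i's bid b_i is a best response to the other agent's bid, the allocation produced by Standard-E-C-E on (b_1, b_2) is EF1 from agent i's perspective with respect to agent i's true valuation. -/

import Mathlib

/-!
Formalization of the strategic Envy-Cycle-Elimination (E-C-E) setting.

There are `n` agents and `m` goods (`Fin m`), with the predefined ordering of agents
and goods given by the orders on `Fin n` and `Fin m`.  A bid consists of a reported
additive valuation (a nonnegative value for every good) together with a preference
list (a permutation of the goods).  E-C-E starts from empty bundles and, while
unallocated goods remain, selects a source of the envy graph (according to the rule of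
the respective variant), adds one unallocated good to that agent's bundle (again
according to the rule of the respective variant), and then repeatedly eliminates envy
cycles, in a fixed order, until the envy graph has a source.
-/

open scoped Classical
open Finset

/-- A bid of an agent: a reported additive valuation (a nonnegative value for every
good) together with a preference list, a permutation of the goods. -/
structure Bid (m : ℕ) where
  val : Fin m → ℝ
  nonneg : ∀ g, 0 ≤ val g
  pref : Equiv.Perm (Fin m)

namespace ECE

variable {n m : ℕ}

/-- Reported (additive) value of a bundle. -/
noncomputable def bval (b : Bid m) (S : Finset (Fin m)) : ℝ := ∑ g ∈ S, b.val g

/-- (True, additive) value of a bundle under the valuation `v`. -/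
noncomputable def value (v : Fin m → ℝ) (S : Finset (Fin m)) : ℝ := ∑ g ∈ S, v g

/-- Envy-graph edge: agent `i` envies agent `j` (w.r.t. the reported valuations) under
the partial allocation `P`. -/
def envies (b : Fin n → Bid m) (P : Fin n → Finset (Fin m)) (i j : Fin n) : Prop :=
  bval (b i) (P i) < bval (b i) (P j)

/-- The sources (vertices of in-degree 0) of the envy graph. -/
noncomputable def sources (b : Fin n → Bid m) (P : Fin n → Finset (Fin m)) :
    Finset (Fin n) :=
  univ.filter fun i => ∀ j, ¬ envies b P j i

/-- The envy cycles of the current envy graph, represented as cyclic permutations `σ`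
of the agents such that every agent moved by `σ` envies her image under `σ`. -/
noncomputable def cycleSet (b : Fin n → Bid m) (P : Fin n → Finset (Fin m)) :
    Finset (Equiv.Perm (Fin n)) :=
  univ.filter fun σ => σ.IsCycle ∧ ∀ i, σ i ≠ i → envies b P i (σ i)

/-- A fixed enumeration of the permutations of the agents, providing the fixed
(lexicographic) order in which envy cycles are eliminated. -/
noncomputable def permIdx (n : ℕ) :
    Equiv.Perm (Fin n) ≃ Fin (Fintype.card (Equiv.Perm (Fin n))) :=
  Fintype.equivFin _

/-- Eliminate one envy cycle (the first one in the fixed order): every agent on the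
cycle receives the bundle of the agent she envies. -/
noncomputable def elimOnce (b : Fin n → Bid m) (P : Fin n → Finset (Fin m)) :
    Fin n → Finset (Fin m) :=
  if h : (cycleSet b P).Nonempty then
    let σ := (permIdx n).symm (((cycleSet b P).image (permIdx n)).min' (h.image _))
    fun i => P (σ i)
  else P

/-- Repeatedly eliminate envy cycles until the envy graph has a source. -/
noncomputable def resolve (b : Fin n → Bid m) :
    ℕ → (Fin n → Finset (Fin m)) → Fin n → Finset (Fin m)
  | 0, P => P
  | fuel + 1, P => if (sources b P).Nonempty then P else resolve b fuel (elimOnce b P)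

/-- The state (current partial allocation, remaining unallocated goods) of an E-C-E
run after a given number of steps.  In each step, if unallocated goods remain, the
agent chosen by `pickAgent` (a source of the envy graph) receives the good chosen by
`pickItem`, and afterwards envy cycles are eliminated until the graph has a source. -/
noncomputable def stateECE (b : Fin n → Bid m)
    (pickAgent : (Fin n → Finset (Fin m)) → Option (Fin n))
    (pickItem : Fin n → (R : Finset (Fin m)) → R.Nonempty → Fin m) :
    ℕ → (Fin n → Finset (Fin m)) × Finset (Fin m)
  | 0 => (fun _ => ∅, univ)
  | k + 1 =>
    let s := stateECE b pickAgent pickItem k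
    if hR : s.2.Nonempty then
      match pickAgent s.1 with
      | none => s
      | some i =>
        let g := pickItem i s.2 hR
        (resolve b (n * n + 1) (fun j => if j = i then insert g (s.1 j) else s.1 j),
          s.2.erase g)
    else s

/-- Source selection of Standard-E-C-E: among multiple sources, the agent earliest in
the predefined ordering of the agents. -/
noncomputable def stdAgent (b : Fin n → Bid m) (P : Fin n → Finset (Fin m)) :
    Option (Fin n) :=
  if h : (sources b P).Nonempty then some ((sources b P).min' h) else none

/-- Source selection of the Priority variants: among multiple sources, those having at
least one outgoing envy edge have priority, ties broken by the predefined ordering of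
the agents. -/
noncomputable def priAgent (b : Fin n → Bid m) (P : Fin n → Finset (Fin m)) :
    Option (Fin n) :=
  if h' : ((sources b P).filter fun i => ∃ j, envies b P i j).Nonempty then
    some (((sources b P).filter fun i => ∃ j, envies b P i j).min' h')
  else if h : (sources b P).Nonempty then some ((sources b P).min' h) else none

/-- The unallocated good of highest reported value, ties broken by the predefined
ordering of the goods. -/
noncomputable def bestItem (v : Fin m → ℝ) (R : Finset (Fin m)) (hR : R.Nonempty) :
    Fin m :=
  (R.filter fun g => ∀ g' ∈ R, v g' ≤ v g).min' (by
    obtain ⟨g, hg, hmax⟩ := R.exists_max_image v hR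
    exact ⟨g, mem_filter.2 ⟨hg, hmax⟩⟩)

/-- The earliest unallocated good in the preference list `pref`. -/
noncomputable def preferredItem (pref : Equiv.Perm (Fin m)) (R : Finset (Fin m))
    (hR : R.Nonempty) : Fin m :=
  pref.symm ((R.image pref).min' (hR.image _))

/-- Standard-E-C-E: sources chosen by the predefined agent ordering, goods assigned in
the predefined ordering of the goods. -/
noncomputable def Standard (b : Fin n → Bid m) : Fin n → Finset (Fin m) :=
  (stateECE b (stdAgent b) (fun _ R hR => R.min' hR) m).1

/-- Priority-E-C-E: envious sources have priority (ties broken by the agent ordering),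
goods assigned in the predefined ordering of the goods. -/
noncomputable def Priority (b : Fin n → Bid m) : Fin n → Finset (Fin m) :=
  (stateECE b (priAgent b) (fun _ R hR => R.min' hR) m).1

/-- Best-Item-E-C-E: envious sources have priority, and the chosen agent receives her
unallocated good of highest reported value (ties broken by the good ordering). -/
noncomputable def BestItemECE (b : Fin n → Bid m) : Fin n → Finset (Fin m) :=
  (stateECE b (priAgent b) (fun i R hR => bestItem (b i).val R hR) m).1

/-- Preferred-Item-E-C-E: envious sources have priority, and the chosen agent receives
the earliest unallocated good in her preference list. -/
noncomputable def PreferredItemECE (b : Fin n → Bid m) : Fin n → Finset (Fin m) :=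
  (stateECE b (priAgent b) (fun i R hR => preferredItem (b i).pref R hR) m).1

/-- The allocation `A` is `α`-EF1 from agent `i`'s perspective w.r.t. the valuation
`v`: for every agent `j` with nonempty bundle there is a good `g ∈ A j` with
`v (A i) ≥ α · v (A j \ {g})`. -/
def EF1From (α : ℝ) (v : Fin m → ℝ) (A : Fin n → Finset (Fin m)) (i : Fin n) : Prop :=
  ∀ j : Fin n, (A j).Nonempty → ∃ g ∈ A j, α * value v ((A j).erase g) ≤ value v (A i)

/-- The allocation `A` is EF1 w.r.t. the valuations `v`. -/
def IsEF1 (v : Fin n → Fin m → ℝ) (A : Fin n → Finset (Fin m)) : Prop :=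
  ∀ i : Fin n, EF1From 1 (v i) A i

/-- Agent `i`'s bid in the profile `b` is a best response to the others' bids, w.r.t.
her true (additive) valuation `v`: no alternative bid gives her a bundle of strictly
larger true value. -/
def BestResponse (Mech : (Fin n → Bid m) → Fin n → Finset (Fin m))
    (v : Fin m → ℝ) (b : Fin n → Bid m) (i : Fin n) : Prop :=
  ∀ b' : Bid m, value v (Mech (Function.update b i b') i) ≤ value v (Mech b i)

/-- The bid profile `b` is a pure Nash equilibrium of the mechanism `Mech` w.r.t. the
true (additive) valuations `v`. -/
def IsPNE (Mech : (Fin n → Bid m) → Fin n → Finset (Fin m))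
    (v : Fin n → Fin m → ℝ) (b : Fin n → Bid m) : Prop :=
  ∀ i : Fin n, BestResponse Mech (v i) b i

end ECE

open ECE

namespace ECEAux
open ECE

variable {m : ℕ}

/-! ### Fin 2 helpers -/

lemma fin2_cases (x : Fin 2) : x = 0 ∨ x = 1 := by revert x; decide

lemma fin2_other (i a : Fin 2) : a = i ∨ a = i + 1 := by revert i a; decide

lemma fin2_add_one_ne (i : Fin 2) : i + 1 ≠ i := by revert i; decide

lemma fin2_add_add (i : Fin 2) : i + 1 + 1 = i := by revert i; decide

lemma perm_fin2 (σ : Equiv.Perm (Fin 2)) : σ = 1 ∨ σ = Equiv.swap 0 1 := by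
  rcases fin2_cases (σ 0) with h0 | h0
  · left
    ext x
    rcases fin2_cases x with rfl | rfl
    · rw [h0]; rfl
    · have h1 : σ 1 ≠ 0 := by
        intro h; exact (by decide : (0:Fin 2) ≠ 1) (σ.injective (h0.trans h.symm))
      rcases fin2_cases (σ 1) with h1' | h1'
      · exact absurd h1' h1
      · rw [h1']; rfl
  · right
    ext x
    rcases fin2_cases x with rfl | rfl
    · rw [h0]; simp
    · have h1 : σ 1 ≠ 1 := by
        intro h
        exact (by decide : (1:Fin 2) ≠ 0) (σ.injective (h.trans h0.symm))
      rcases fin2_cases (σ 1) with h1' | h1'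
      · rw [h1']; simp
      · exact absurd h1' h1

/-! ### bval basics -/

lemma bval_nonneg (β : Bid m) (S : Finset (Fin m)) : 0 ≤ bval β S :=
  Finset.sum_nonneg fun g _ => β.nonneg g

lemma bval_mono (β : Bid m) {S T : Finset (Fin m)} (h : S ⊆ T) : bval β S ≤ bval β T :=
  Finset.sum_le_sum_of_subset_of_nonneg h fun g _ _ => β.nonneg g

lemma envies_irrefl (c : Fin 2 → Bid m) (P : Fin 2 → Finset (Fin m)) (a : Fin 2) :
    ¬ envies c P a a := lt_irrefl _

/-! ### Two-agent primitives -/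

def swapFun (P : Fin 2 → Finset (Fin m)) : Fin 2 → Finset (Fin m) := fun a => P (a + 1)

def mutualA (c : Fin 2 → Bid m) (P : Fin 2 → Finset (Fin m)) : Prop :=
  envies c P 0 1 ∧ envies c P 1 0

noncomputable def recvA (c : Fin 2 → Bid m) (P : Fin 2 → Finset (Fin m)) : Fin 2 :=
  if envies c P 1 0 then 1 else 0

noncomputable def addA (c : Fin 2 → Bid m) (P : Fin 2 → Finset (Fin m)) (g : Fin m) :
    Fin 2 → Finset (Fin m) :=
  fun a => if a = recvA c P then insert g (P a) else P a

noncomputable def postA (c : Fin 2 → Bid m) (P : Fin 2 → Finset (Fin m)) :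
    Fin 2 → Finset (Fin m) :=
  if mutualA c P then swapFun P else P

noncomputable def modelA (c : Fin 2 → Bid m) : ℕ → Fin 2 → Finset (Fin m)
  | 0 => fun _ => ∅
  | s + 1 => if h : s < m then postA c (addA c (modelA c s) ⟨s, h⟩) else modelA c s

/-! ### Envy-cycle machinery on two agents -/

variable {c : Fin 2 → Bid m}

lemma mutual_envies_fst {P : Fin 2 → Finset (Fin m)} (h : mutualA c P) (i : Fin 2) :
    envies c P i (i + 1) := by
  rcases fin2_cases i with rfl | rfl
  · exact h.1
  · exact h.2

lemma swap_eq_addone (a : Fin 2) : Equiv.swap 0 1 a = a + 1 := by revert a; decide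

lemma cycleSet_of_mutual {P : Fin 2 → Finset (Fin m)} (h : mutualA c P) :
    cycleSet c P = {Equiv.swap 0 1} := by
  ext σ
  simp only [cycleSet, Finset.mem_filter, Finset.mem_univ, true_and, Finset.mem_singleton]
  constructor
  · rintro ⟨hc, -⟩
    rcases perm_fin2 σ with rfl | rfl
    · exact absurd hc (Equiv.Perm.not_isCycle_one)
    · rfl
  · rintro rfl
    refine ⟨Equiv.Perm.isCycle_swap (by decide), fun a _ => ?_⟩
    rw [swap_eq_addone]
    exact mutual_envies_fst h a

lemma cycleSet_of_not_mutual {P : Fin 2 → Finset (Fin m)} (h : ¬ mutualA c P) :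
    cycleSet c P = ∅ := by
  ext σ
  simp only [cycleSet, Finset.mem_filter, Finset.mem_univ, true_and,
    Finset.notMem_empty, iff_false, not_and]
  intro hc henv
  rcases perm_fin2 σ with rfl | rfl
  · exact Equiv.Perm.not_isCycle_one hc
  · refine h ⟨?_, ?_⟩
    · have := henv 0 (by decide)
      rwa [swap_eq_addone] at this
    · have := henv 1 (by decide)
      rwa [swap_eq_addone] at this

lemma elimOnce_of_mutual {P : Fin 2 → Finset (Fin m)} (h : mutualA c P) :
    elimOnce c P = swapFun P := by
  have hcy := cycleSet_of_mutual h
  have hne : (cycleSet c P).Nonempty := by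
    rw [hcy]; exact Finset.singleton_nonempty _
  rw [elimOnce, dif_pos hne]
  funext a
  have himg : (cycleSet c P).image (permIdx 2) = {permIdx 2 (Equiv.swap 0 1)} := by
    rw [hcy, Finset.image_singleton]
  simp only [himg, Finset.min'_singleton, Equiv.symm_apply_apply]
  rw [swap_eq_addone]
  rfl

lemma zero_mem_sources_of {P : Fin 2 → Finset (Fin m)} (h : ¬ envies c P 1 0) :
    (0 : Fin 2) ∈ sources c P := by
  simp only [sources, Finset.mem_filter, Finset.mem_univ, true_and]
  intro a
  rcases fin2_cases a with rfl | rfl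
  · exact envies_irrefl c P 0
  · exact h

lemma one_mem_sources_of {P : Fin 2 → Finset (Fin m)} (h : ¬ envies c P 0 1) :
    (1 : Fin 2) ∈ sources c P := by
  simp only [sources, Finset.mem_filter, Finset.mem_univ, true_and]
  intro a
  rcases fin2_cases a with rfl | rfl
  · exact h
  · exact envies_irrefl c P 1

lemma sources_nonempty_of_not_mutual {P : Fin 2 → Finset (Fin m)} (h : ¬ mutualA c P) :
    (sources c P).Nonempty := by
  by_cases h10 : envies c P 1 0
  · have h01 : ¬ envies c P 0 1 := fun h01 => h ⟨h01, h10⟩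
    exact ⟨1, one_mem_sources_of h01⟩
  · exact ⟨0, zero_mem_sources_of h10⟩

lemma sources_empty_of_mutual {P : Fin 2 → Finset (Fin m)} (h : mutualA c P) :
    sources c P = ∅ := by
  ext a
  simp only [sources, Finset.mem_filter, Finset.mem_univ, true_and,
    Finset.notMem_empty, iff_false, not_forall, not_not]
  rcases fin2_cases a with rfl | rfl
  · exact ⟨1, h.2⟩
  · exact ⟨0, h.1⟩

lemma not_mutual_swapFun {P : Fin 2 → Finset (Fin m)} (h : mutualA c P) :
    ¬ mutualA c (swapFun P) := by
  rintro ⟨h01, -⟩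
  have : envies c P 0 1 := h.1
  simp only [envies, swapFun] at h01
  norm_num at h01
  simp only [envies] at this
  exact absurd h01 (not_lt.2 (le_of_lt this))

lemma resolve_of_not_mutual {P : Fin 2 → Finset (Fin m)} (h : ¬ mutualA c P) (fuel : ℕ) :
    resolve c (fuel + 1) P = P := by
  rw [resolve, if_pos (sources_nonempty_of_not_mutual h)]

lemma resolve_of_mutual {P : Fin 2 → Finset (Fin m)} (h : mutualA c P) (fuel : ℕ) :
    resolve c (fuel + 2) P = swapFun P := by
  rw [resolve]
  rw [if_neg (by rw [sources_empty_of_mutual h]; exact fun hne => hne.ne_empty rfl),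
    elimOnce_of_mutual h]
  exact resolve_of_not_mutual (not_mutual_swapFun h) fuel

/-- The result of `resolve` with fuel 5 (= 2*2+1) on any post-addition state. -/
lemma resolve_eq_postA (P : Fin 2 → Finset (Fin m)) :
    resolve c (2 * 2 + 1) P = postA c P := by
  by_cases h : mutualA c P
  · rw [show (2 * 2 + 1) = 3 + 2 from rfl, resolve_of_mutual h, postA, if_pos h]
  · rw [show (2 * 2 + 1) = 4 + 1 from rfl, resolve_of_not_mutual h, postA, if_neg h]

lemma stdAgent_eq (P : Fin 2 → Finset (Fin m)) (h : ¬ mutualA c P) :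
    stdAgent c P = some (recvA c P) := by
  rw [stdAgent, dif_pos (sources_nonempty_of_not_mutual h)]
  congr 1
  by_cases h10 : envies c P 1 0
  · have h01 : ¬ envies c P 0 1 := fun h01 => h ⟨h01, h10⟩
    have hmem : (1 : Fin 2) ∈ sources c P := one_mem_sources_of h01
    have hle : ∀ a ∈ sources c P, (1 : Fin 2) ≤ a := by
      intro a ha
      rcases fin2_cases a with rfl | rfl
      · exfalso
        simp only [sources, Finset.mem_filter] at ha
        exact ha.2 1 h10
      · exact le_refl _
    have := le_antisymm (Finset.min'_le _ _ hmem) (Finset.le_min' _ _ _ hle)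
    rw [this, recvA, if_pos h10]
  · have hmem : (0 : Fin 2) ∈ sources c P := zero_mem_sources_of h10
    have : (sources c P).min' _ = 0 :=
      le_antisymm (Finset.min'_le _ _ hmem) (Fin.zero_le _)
    rw [this, recvA, if_neg h10]

/-! ### The clean step model and its invariants -/

lemma modelA_succ {s : ℕ} (h : s < m) :
    modelA c (s + 1) = postA c (addA c (modelA c s) ⟨s, h⟩) := by
  rw [modelA, dif_pos h]

lemma modelA_stall {s : ℕ} (h : ¬ s < m) : modelA c (s + 1) = modelA c s := by
  rw [modelA, dif_neg h]

lemma addA_recv (P : Fin 2 → Finset (Fin m)) (g : Fin m) :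
    addA c P g (recvA c P) = insert g (P (recvA c P)) := by
  rw [addA, if_pos rfl]

lemma addA_other (P : Fin 2 → Finset (Fin m)) (g : Fin m) {a : Fin 2}
    (ha : a ≠ recvA c P) : addA c P g a = P a := by
  rw [addA, if_neg ha]

lemma mem_addA {P : Fin 2 → Finset (Fin m)} {g g' : Fin m} {a : Fin 2}
    (h : g' ∈ addA c P g a) : g' ∈ P a ∨ g' = g := by
  rw [addA] at h
  split at h
  · rcases Finset.mem_insert.1 h with h | h
    · exact Or.inr h
    · exact Or.inl h
  · exact Or.inl h

lemma modelA_bound : ∀ (s : ℕ) (a : Fin 2) (g' : Fin m), g' ∈ modelA c s a → (g' : ℕ) < s := by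
  intro s
  induction s with
  | zero => intro a g' h; simp [modelA] at h
  | succ s ih =>
    intro a g' h
    by_cases hs : s < m
    · rw [modelA_succ hs, postA] at h
      have key : ∀ a', g' ∈ addA c (modelA c s) ⟨s, hs⟩ a' → (g' : ℕ) < s + 1 := by
        intro a' ha'
        rcases mem_addA ha' with h' | h'
        · exact Nat.lt_succ_of_lt (ih a' g' h')
        · rw [h']; exact Nat.lt_succ_self s
      split at h
      · exact key _ h
      · exact key _ h
    · rw [modelA_stall hs] at h
      exact Nat.lt_succ_of_lt (ih a g' h)

lemma modelA_disj : ∀ (s : ℕ) (g' : Fin m), ¬ (g' ∈ modelA c s 0 ∧ g' ∈ modelA c s 1) := by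
  intro s
  induction s with
  | zero => intro g' h; simp [modelA] at h
  | succ s ih =>
    intro g' h
    by_cases hs : s < m
    · rw [modelA_succ hs, postA] at h
      set P := modelA c s with hP
      set g : Fin m := ⟨s, hs⟩ with hg
      have fresh : ∀ a, g ∉ P a := fun a hmem => lt_irrefl s (modelA_bound s a g hmem)
      have key : ¬ (g' ∈ addA c P g 0 ∧ g' ∈ addA c P g 1) := by
        rintro ⟨h0, h1⟩
        rcases mem_addA h0 with h0' | h0' <;> rcases mem_addA h1 with h1' | h1'
        · exact ih g' ⟨h0', h1'⟩
        · exact fresh 0 (h1' ▸ h0')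
        · exact fresh 1 (h0' ▸ h1')
        · subst h0'
          rcases fin2_cases (recvA c P) with hr | hr
          · have : (1 : Fin 2) ≠ recvA c P := by rw [hr]; decide
            rw [addA_other _ _ this] at h1
            exact fresh 1 h1
          · have : (0 : Fin 2) ≠ recvA c P := by rw [hr]; decide
            rw [addA_other _ _ this] at h0
            exact fresh 0 h0
      split at h
      · exact key ⟨h.2, h.1⟩
      · exact key h
    · rw [modelA_stall hs] at h
      exact ih g' h

lemma modelA_disj' {s : ℕ} {g' : Fin m} (i : Fin 2) (h : g' ∈ modelA c s i) :
    g' ∉ modelA c s (i + 1) := by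
  intro h'
  rcases fin2_cases i with rfl | rfl
  · exact modelA_disj s g' ⟨h, h'⟩
  · exact modelA_disj s g' ⟨h', h⟩

lemma modelA_union : ∀ s : ℕ,
    modelA c s 0 ∪ modelA c s 1 = Finset.univ.filter fun g : Fin m => (g : ℕ) < s := by
  intro s
  induction s with
  | zero =>
    ext g
    simp [modelA]
  | succ s ih =>
    by_cases hs : s < m
    · rw [modelA_succ hs, postA]
      set P := modelA c s
      set g : Fin m := ⟨s, hs⟩ with hg
      have hunion : addA c P g 0 ∪ addA c P g 1 = insert g (P 0 ∪ P 1) := by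
        rcases fin2_cases (recvA c P) with hr | hr
        · rw [show addA c P g 0 = insert g (P 0) by rw [← hr] at *; exact addA_recv P g,
            addA_other P g (by rw [hr]; decide)]
          rw [Finset.insert_union]
        · rw [show addA c P g 1 = insert g (P 1) by rw [← hr] at *; exact addA_recv P g,
            addA_other P g (by rw [hr]; decide)]
          rw [Finset.union_insert]
      have hfilter : insert g (P 0 ∪ P 1) =
          Finset.univ.filter fun x : Fin m => (x : ℕ) < s + 1 := by
        rw [ih]
        ext x
        simp only [Finset.mem_insert, Finset.mem_filter, Finset.mem_univ, true_and]
        constructor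
        · rintro (rfl | hx)
          · exact Nat.lt_succ_self s
          · exact Nat.lt_succ_of_lt hx
        · intro hx
          rcases Nat.lt_succ_iff_lt_or_eq.1 hx with hx | hx
          · exact Or.inr hx
          · exact Or.inl (Fin.ext hx)
      split
      · rw [show swapFun (addA c P g) 0 = addA c P g 1 from rfl,
          show swapFun (addA c P g) 1 = addA c P g 0 from rfl,
          Finset.union_comm, hunion, hfilter]
      · rw [hunion, hfilter]
    · rw [modelA_stall hs, ih]
      ext x
      simp only [Finset.mem_filter, Finset.mem_univ, true_and]
      have hxm : (x : ℕ) < m := x.isLt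
      omega

lemma modelA_nomutual (s : ℕ) : ¬ mutualA c (modelA c s) := by
  cases s with
  | zero =>
    rintro ⟨h, -⟩
    simp only [envies, modelA] at h
    exact lt_irrefl _ h
  | succ s =>
    by_cases hs : s < m
    · rw [modelA_succ hs, postA]
      by_cases hmut : mutualA c (addA c (modelA c s) ⟨s, hs⟩)
      · rw [if_pos hmut]
        exact not_mutual_swapFun hmut
      · rw [if_neg hmut]
        exact hmut
    · rw [modelA_stall hs]
      rintro ⟨h, h'⟩
      cases s with
      | zero =>
        simp only [envies, modelA] at h
        exact lt_irrefl _ h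
      | succ t => exact modelA_nomutual (t+1) ⟨h, h'⟩

lemma state_eq : ∀ k : ℕ,
    stateECE c (stdAgent c) (fun _ R hR => R.min' hR) k =
      (modelA c k, Finset.univ.filter fun g : Fin m => k ≤ (g : ℕ)) := by
  intro k
  induction k with
  | zero =>
    rw [stateECE]
    refine Prod.ext ?_ ?_
    · rfl
    · simp
  | succ k ih =>
    rw [stateECE, ih]
    by_cases hk : k < m
    · have hne : (Finset.univ.filter fun g : Fin m => k ≤ (g : ℕ)).Nonempty :=
        ⟨⟨k, hk⟩, by simp⟩
      have hmin : (Finset.univ.filter fun g : Fin m => k ≤ (g : ℕ)).min' hne = ⟨k, hk⟩ := by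
        refine le_antisymm (Finset.min'_le _ _ (by simp)) (Finset.le_min' _ _ _ ?_)
        intro x hx
        simp only [Finset.mem_filter, Finset.mem_univ, true_and] at hx
        exact hx
      simp only [dif_pos hne, stdAgent_eq _ (modelA_nomutual k), hmin]
      refine Prod.ext ?_ ?_
      · show resolve c (2 * 2 + 1) _ = _
        rw [show (fun j => if j = recvA c (modelA c k) then insert (⟨k, hk⟩ : Fin m)
            (modelA c k j) else modelA c k j) = addA c (modelA c k) ⟨k, hk⟩ from rfl,
          resolve_eq_postA, modelA_succ hk]
      · show (Finset.univ.filter fun g : Fin m => k ≤ (g : ℕ)).erase ⟨k, hk⟩ = _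
        ext x
        simp only [Finset.mem_erase, Finset.mem_filter, Finset.mem_univ, true_and,
          Ne, Fin.ext_iff]
        omega
    · have hemp : (Finset.univ.filter fun g : Fin m => k ≤ (g : ℕ)) = ∅ := by
        ext x
        simp only [Finset.mem_filter, Finset.mem_univ, true_and, Finset.notMem_empty,
          iff_false, not_le]
        exact lt_of_lt_of_le x.isLt (Nat.le_of_not_lt hk)
      rw [dif_neg (by rw [hemp]; exact fun h => h.ne_empty rfl)]
      refine Prod.ext ?_ ?_
      · show modelA c k = modelA c (k+1)
        rw [modelA_stall hk]
      · show (Finset.univ.filter fun g : Fin m => k ≤ (g : ℕ)) = _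
        rw [hemp]
        ext x
        simp only [Finset.notMem_empty, false_iff, Finset.mem_filter, Finset.mem_univ,
          true_and, not_le]
        exact lt_of_lt_of_le x.isLt (by omega)

lemma Standard_eq (c : Fin 2 → Bid m) : Standard c = modelA c m := by
  show (stateECE c (stdAgent c) (fun _ R hR => R.min' hR) m).1 = _
  rw [state_eq]

/-! ### Deviation machinery -/

lemma mutual_envies_snd {P : Fin 2 → Finset (Fin m)} (h : mutualA c P) (i : Fin 2) :
    envies c P (i + 1) i := by
  rcases fin2_cases i with rfl | rfl
  · exact h.2
  · exact h.1

lemma mutual_of {P : Fin 2 → Finset (Fin m)} (i : Fin 2)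
    (h1 : envies c P i (i + 1)) (h2 : envies c P (i + 1) i) : mutualA c P := by
  rcases fin2_cases i with rfl | rfl
  · exact ⟨h1, h2⟩
  · exact ⟨h2, h1⟩

lemma addA_supset (P : Fin 2 → Finset (Fin m)) (g : Fin m) (a : Fin 2) :
    P a ⊆ addA c P g a := by
  rw [addA]
  split
  · exact Finset.subset_insert _ _
  · exact Finset.Subset.refl _

lemma pile_compl (c : Fin 2 → Bid m) (i : Fin 2) :
    modelA c m i = Finset.univ \ modelA c m (i + 1) := by
  ext x
  simp only [Finset.mem_sdiff, Finset.mem_univ, true_and]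
  constructor
  · exact fun h => modelA_disj' i h
  · intro h
    have hx : x ∈ modelA c m 0 ∪ modelA c m 1 := by
      rw [modelA_union]
      simp [x.isLt]
    rcases Finset.mem_union.1 hx with hx | hx
    · rcases fin2_other i 0 with h0 | h0
      · rwa [← h0]
      · rw [h0] at hx; exact absurd hx h
    · rcases fin2_other i 1 with h0 | h0
      · rwa [← h0]
      · rw [h0] at hx; exact absurd hx h

section Deviation

variable {c' b : Fin 2 → Bid m} {i : Fin 2} {γ : Fin m}

/-- Agent `i` never envies while holding `γ` (and conversely always envies when the
other holds `γ`). -/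
def DevBid (c' b : Fin 2 → Bid m) (i : Fin 2) (γ : Fin m) : Prop :=
  (∀ a, a ≠ i → c' a = b a) ∧
  (∀ S, γ ∉ S → bval (c' i) S = bval (b i) S) ∧
  (∀ S T : Finset (Fin m), γ ∈ S → γ ∉ T → bval (c' i) T < bval (c' i) S)

lemma devBid_exists (b : Fin 2 → Bid m) (i : Fin 2) (γ : Fin m) :
    ∃ w' : Bid m, DevBid (Function.update b i w') b i γ := by
  set Z : ℝ := bval (b i) Finset.univ + 1 with hZ
  have hZpos : 0 < Z := by
    have := bval_nonneg (b i) (Finset.univ : Finset (Fin m))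
    rw [hZ]; linarith
  refine ⟨⟨fun g => (b i).val g + (if g = γ then Z else 0), ?_, (b i).pref⟩, ?_, ?_, ?_⟩
  · intro g
    have := (b i).nonneg g
    show 0 ≤ (b i).val g + (if g = γ then Z else 0)
    split <;> linarith
  · intro a ha
    rw [Function.update_of_ne ha]
  · intro S hS
    rw [Function.update_self]
    show (∑ g ∈ S, ((b i).val g + if g = γ then Z else 0)) = _
    rw [Finset.sum_add_distrib, Finset.sum_ite_eq' S γ (fun _ => Z), if_neg hS, add_zero]
    rfl
  · intro S T hS hT
    rw [Function.update_self]
    show (∑ g ∈ T, ((b i).val g + if g = γ then Z else 0)) <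
      (∑ g ∈ S, ((b i).val g + if g = γ then Z else 0))
    rw [Finset.sum_add_distrib, Finset.sum_add_distrib,
      Finset.sum_ite_eq' S γ (fun _ => Z), Finset.sum_ite_eq' T γ (fun _ => Z),
      if_pos hS, if_neg hT, add_zero]
    have h1 : bval (b i) T ≤ Z - 1 := by
      rw [hZ]
      have := bval_mono (b i) (Finset.subset_univ T)
      simp only [add_sub_cancel_right]
      exact this
    have h2 : (0:ℝ) ≤ bval (b i) S := bval_nonneg _ _
    show bval (b i) T < bval (b i) S + Z
    linarith

variable (hdev : DevBid c' b i γ)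

include hdev

lemma dev_envies_iff {P : Fin 2 → Finset (Fin m)} (hP : ∀ a, γ ∉ P a) (x y : Fin 2) :
    envies c' P x y ↔ envies b P x y := by
  unfold envies
  by_cases hx : x = i
  · subst hx
    rw [hdev.2.1 _ (hP x), hdev.2.1 _ (hP y)]
  · rw [hdev.1 x hx]

lemma dev_prefix {t : ℕ} (hγv : (γ : ℕ) = t) :
    ∀ s ≤ t, modelA c' s = modelA b s := by
  intro s hs
  induction s with
  | zero => rfl
  | succ s ih =>
    have hst : s < t := hs
    have ihs := ih (le_of_lt hst)
    by_cases hsm : s < m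
    · rw [modelA_succ hsm, modelA_succ hsm, ihs]
      set P := modelA b s with hPdef
      have hPfree : ∀ a, γ ∉ P a := by
        intro a hmem
        have := modelA_bound s a γ hmem
        omega
      have henv : ∀ x y, envies c' P x y ↔ envies b P x y := dev_envies_iff hdev hPfree
      have hrecv : recvA c' P = recvA b P := by
        unfold recvA
        rw [if_congr (henv 1 0) rfl rfl]
      have haddeq : addA c' P ⟨s, hsm⟩ = addA b P ⟨s, hsm⟩ := by
        funext a
        unfold addA
        rw [hrecv]
      rw [haddeq]
      set Q := addA b P ⟨s, hsm⟩ with hQdef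
      have hQfree : ∀ a, γ ∉ Q a := by
        intro a hmem
        rcases mem_addA hmem with h | h
        · exact hPfree a h
        · have hv : (γ : ℕ) = s := by rw [h]
          omega
      have henvQ : ∀ x y, envies c' Q x y ↔ envies b Q x y := dev_envies_iff hdev hQfree
      have hiff : mutualA c' Q ↔ mutualA b Q := and_congr (henvQ 0 1) (henvQ 1 0)
      unfold postA
      by_cases hmq : mutualA b Q
      · rw [if_pos (hiff.2 hmq), if_pos hmq]
      · rw [if_neg (fun h => hmq (hiff.1 h)), if_neg hmq]
    · rw [modelA_stall hsm, modelA_stall hsm, ihs]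

lemma dev_capt_step {s : ℕ} (h : γ ∈ modelA c' s i) :
    modelA c' s i ⊆ modelA c' (s + 1) i ∧ γ ∈ modelA c' (s + 1) i := by
  by_cases hsm : s < m
  · rw [modelA_succ hsm]
    set P := modelA c' s with hPdef
    set Q := addA c' P ⟨s, hsm⟩ with hQdef
    have hQi : γ ∈ Q i := addA_supset P _ i h
    have hQo : γ ∉ Q (i + 1) := by
      intro hmem
      rcases mem_addA hmem with h' | h'
      · exact modelA_disj' i h h'
      · have := modelA_bound s i γ h
        have hv : (γ : ℕ) = s := by rw [h']
        omega
    have hnm : ¬ mutualA c' Q := by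
      intro hmut
      have h1 : envies c' Q i (i + 1) := mutual_envies_fst hmut i
      have h2 := hdev.2.2 (Q i) (Q (i + 1)) hQi hQo
      exact absurd h1 (not_lt.2 (le_of_lt h2))
    rw [postA, if_neg hnm]
    exact ⟨addA_supset P _ i, hQi⟩
  · rw [modelA_stall hsm]
    exact ⟨Finset.Subset.refl _, h⟩

lemma dev_capt {s s' : ℕ} (hss : s ≤ s') (h : γ ∈ modelA c' s i) :
    modelA c' s i ⊆ modelA c' s' i := by
  induction s' with
  | zero =>
    have : s = 0 := Nat.le_zero.1 hss
    subst this
    exact Finset.Subset.refl _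
  | succ s' ih =>
    rcases Nat.le_succ_iff.1 hss with hss' | rfl
    · have hsub := ih hss'
      have hmem : γ ∈ modelA c' s' i := hsub h
      exact hsub.trans (dev_capt_step hdev hmem).1
    · exact Finset.Subset.refl _

lemma dev_chase_step {D : Finset (Fin m)} (hγD : γ ∈ D) {s : ℕ}
    (h : (modelA c' s (i + 1) = D ∧
        bval (b (i + 1)) (modelA c' s i) ≤ bval (b (i + 1)) D) ∨ D ⊆ modelA c' s i) :
    (modelA c' (s + 1) (i + 1) = D ∧
        bval (b (i + 1)) (modelA c' (s + 1) i) ≤ bval (b (i + 1)) D) ∨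
      D ⊆ modelA c' (s + 1) i := by
  rcases h with ⟨hD, hu⟩ | hcap
  · by_cases hsm : s < m
    · set P := modelA c' s with hPdef
      have hγP1 : γ ∈ P (i + 1) := by rw [hD]; exact hγD
      have hγPi : γ ∉ P i := fun h' => modelA_disj' i h' hγP1
      have henv_i : envies c' P i (i + 1) := hdev.2.2 _ _ hγP1 hγPi
      have hnm : ¬ mutualA c' P := modelA_nomutual s
      have henv_o : ¬ envies c' P (i + 1) i := fun h' => hnm (mutual_of i henv_i h')
      have hrecv : recvA c' P = i := by
        rcases fin2_cases i with rfl | rfl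
        · rw [show (0 : Fin 2) + 1 = 1 from rfl] at henv_o
          exact if_neg henv_o
        · rw [show (1 : Fin 2) + 1 = 0 from rfl] at henv_i
          exact if_pos henv_i
      set Q := addA c' P ⟨s, hsm⟩ with hQdef
      have hQi : Q i = insert ⟨s, hsm⟩ (P i) := by
        rw [hQdef, ← hrecv]
        exact addA_recv P _
      have hQo : Q (i + 1) = D := by
        rw [hQdef, addA_other P _ (by rw [hrecv]; exact fin2_add_one_ne i), hD]
      have hγs : γ ≠ (⟨s, hsm⟩ : Fin m) := by
        intro h'
        have := modelA_bound s (i + 1) γ hγP1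
        have hv : (γ : ℕ) = s := by rw [h']
        omega
      have hγQi : γ ∉ Q i := by
        rw [hQi]
        simp only [Finset.mem_insert, not_or]
        exact ⟨hγs, hγPi⟩
      have hγQo : γ ∈ Q (i + 1) := by rw [hQo]; exact hγD
      have henvQ_i : envies c' Q i (i + 1) := hdev.2.2 _ _ hγQo hγQi
      by_cases hsw : envies c' Q (i + 1) i
      · have hmut : mutualA c' Q := mutual_of i henvQ_i hsw
        right
        rw [modelA_succ hsm, ← hPdef, ← hQdef, postA, if_pos hmut]
        show D ⊆ Q (i + 1)
        rw [hQo]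
      · have hnmQ : ¬ mutualA c' Q := fun h' => hsw (mutual_envies_snd h' i)
        left
        rw [modelA_succ hsm, ← hPdef, ← hQdef, postA, if_neg hnmQ]
        refine ⟨hQo, ?_⟩
        have : ¬ (bval (c' (i + 1)) (Q (i + 1)) < bval (c' (i + 1)) (Q i)) := hsw
        rw [hdev.1 (i + 1) (fin2_add_one_ne i), hQo] at this
        exact not_lt.1 this
    · rw [modelA_stall hsm]
      exact Or.inl ⟨hD, hu⟩
  · right
    have hγs : γ ∈ modelA c' s i := hcap hγD
    exact hcap.trans (dev_capt_step hdev hγs).1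

lemma dev_chase {D : Finset (Fin m)} (hγD : γ ∈ D) {t₀ : ℕ}
    (h0 : (modelA c' t₀ (i + 1) = D ∧
        bval (b (i + 1)) (modelA c' t₀ i) ≤ bval (b (i + 1)) D) ∨ D ⊆ modelA c' t₀ i)
    {s : ℕ} (hs : t₀ ≤ s) :
    (modelA c' s (i + 1) = D ∧
        bval (b (i + 1)) (modelA c' s i) ≤ bval (b (i + 1)) D) ∨ D ⊆ modelA c' s i := by
  induction s, hs using Nat.le_induction with
  | base => exact h0
  | succ s hs ih => exact dev_chase_step hdev hγD ih

lemma dev_F {t : ℕ} (ht : t < m) (hγt : γ = ⟨t, ht⟩)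
    (hr : recvA b (modelA b t) = i) :
    insert γ (modelA b t i) ⊆ modelA c' m i := by
  have hγv : (γ : ℕ) = t := by rw [hγt]
  have hpre : modelA c' t = modelA b t := dev_prefix hdev hγv t (le_refl t)
  set P := modelA b t with hPdef
  have hPfree : ∀ a, γ ∉ P a := by
    intro a hmem
    have := modelA_bound t a γ hmem
    omega
  have hrecv : recvA c' P = i := by
    rw [← hr]
    unfold recvA
    exact if_congr (dev_envies_iff hdev hPfree 1 0) rfl rfl
  have hstep : modelA c' (t + 1) = postA c' (addA c' P γ) := by
    rw [modelA_succ ht, hpre, ← hγt]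
  set Q := addA c' P γ with hQdef
  have hQi : Q i = insert γ (P i) := by rw [hQdef, ← hrecv]; exact addA_recv P γ
  have hQo : Q (i + 1) = P (i + 1) := by
    rw [hQdef, addA_other P γ (by rw [hrecv]; exact fin2_add_one_ne i)]
  have hγQi : γ ∈ Q i := by rw [hQi]; exact Finset.mem_insert_self γ _
  have hγQo : γ ∉ Q (i + 1) := by rw [hQo]; exact hPfree (i + 1)
  have hnm : ¬ mutualA c' Q := by
    intro h'
    exact absurd (mutual_envies_fst h' i) (not_lt.2 (le_of_lt (hdev.2.2 _ _ hγQi hγQo)))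
  have hmodel : modelA c' (t + 1) i = insert γ (P i) := by
    rw [hstep, postA, if_neg hnm, hQi]
  have hmem : γ ∈ modelA c' (t + 1) i := by
    rw [hmodel]; exact Finset.mem_insert_self γ _
  have hsub := dev_capt hdev (show t + 1 ≤ m from ht) hmem
  rw [hmodel] at hsub
  exact hsub

lemma dev_SG {t : ℕ} (ht : t < m) (hγt : γ = ⟨t, ht⟩)
    (hr : recvA b (modelA b t) = i + 1) :
    insert γ (modelA b t (i + 1)) ⊆ modelA c' m i ∨
      (modelA c' m i = Finset.univ \ insert γ (modelA b t (i + 1)) ∧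
        bval (b (i + 1)) (Finset.univ \ insert γ (modelA b t (i + 1))) ≤
          bval (b (i + 1)) (insert γ (modelA b t (i + 1)))) := by
  have hγv : (γ : ℕ) = t := by rw [hγt]
  have hpre : modelA c' t = modelA b t := dev_prefix hdev hγv t (le_refl t)
  set P := modelA b t with hPdef
  set D := insert γ (P (i + 1)) with hDdef
  have hγD : γ ∈ D := Finset.mem_insert_self γ _
  have hPfree : ∀ a, γ ∉ P a := by
    intro a hmem
    have := modelA_bound t a γ hmem
    omega
  have hrecv : recvA c' P = i + 1 := by
    rw [← hr]
    unfold recvA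
    exact if_congr (dev_envies_iff hdev hPfree 1 0) rfl rfl
  have hstep : modelA c' (t + 1) = postA c' (addA c' P γ) := by
    rw [modelA_succ ht, hpre, ← hγt]
  set Q := addA c' P γ with hQdef
  have hQo : Q (i + 1) = D := by rw [hQdef, hDdef, ← hrecv]; exact addA_recv P γ
  have hQi : Q i = P i := by
    rw [hQdef, addA_other P γ (by rw [hrecv]; exact (fin2_add_one_ne i).symm)]
  have hγQo : γ ∈ Q (i + 1) := by rw [hQo]; exact hγD
  have hγQi : γ ∉ Q i := by rw [hQi]; exact hPfree i
  have henvQ_i : envies c' Q i (i + 1) := hdev.2.2 _ _ hγQo hγQi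
  by_cases hsw : envies c' Q (i + 1) i
  · have hmut : mutualA c' Q := mutual_of i henvQ_i hsw
    have hmodel : modelA c' (t + 1) i = D := by
      rw [hstep, postA, if_pos hmut]
      show Q (i + 1) = D
      exact hQo
    have hmem : γ ∈ modelA c' (t + 1) i := by rw [hmodel]; exact hγD
    have hsub := dev_capt hdev (show t + 1 ≤ m from ht) hmem
    rw [hmodel] at hsub
    exact Or.inl hsub
  · have hnmQ : ¬ mutualA c' Q := fun h' => hsw (mutual_envies_snd h' i)
    have hmodel : modelA c' (t + 1) = Q := by rw [hstep, postA, if_neg hnmQ]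
    have h0 : (modelA c' (t + 1) (i + 1) = D ∧
        bval (b (i + 1)) (modelA c' (t + 1) i) ≤ bval (b (i + 1)) D) ∨
        D ⊆ modelA c' (t + 1) i := by
      left
      rw [hmodel, hQi, hQo]
      refine ⟨rfl, ?_⟩
      have : ¬ (bval (c' (i + 1)) (Q (i + 1)) < bval (c' (i + 1)) (Q i)) := hsw
      rw [hdev.1 (i + 1) (fin2_add_one_ne i), hQo, hQi] at this
      exact not_lt.1 this
    have hend := dev_chase hdev hγD h0 (show t + 1 ≤ m from ht)
    rcases hend with ⟨hDm, hum⟩ | hcap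
    · right
      have hcompl : modelA c' m i = Finset.univ \ D := by
        rw [pile_compl c' i, hDm]
      constructor
      · exact hcompl
      · rw [← hcompl]
        exact hum
    · exact Or.inl hcap

end Deviation

/-! ### The main contradiction argument -/

lemma sdiff_insert_erase (Y D : Finset (Fin m)) (g : Fin m) :
    Y \ insert g D = (Y \ D).erase g := by
  ext x
  simp only [Finset.mem_sdiff, Finset.mem_insert, Finset.mem_erase, not_or]
  tauto

lemma main_contra (b : Fin 2 → Bid m) (i : Fin 2) (vv : Fin m → ℝ)
    (hvv : ∀ g, 0 ≤ vv g)
    (hW : ∀ w' : Bid m,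
      value vv (modelA (Function.update b i w') m i) ≤ value vv (modelA b m i))
    (hne : (modelA b m (i + 1)).Nonempty)
    (hb : ∀ g ∈ modelA b m (i + 1),
      value vv (modelA b m i) < value vv ((modelA b m (i + 1)).erase g)) : False := by
  set W : ℝ := value vv (modelA b m i) with hWdef
  set Y : Finset (Fin m) := modelA b m (i + 1) with hYdef
  have hmono : ∀ {S T : Finset (Fin m)}, S ⊆ T → value vv S ≤ value vv T :=
    fun h => Finset.sum_le_sum_of_subset_of_nonneg h fun g _ _ => hvv g
  have hvnn : ∀ S : Finset (Fin m), 0 ≤ value vv S :=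
    fun S => Finset.sum_nonneg fun g _ => hvv g
  have hW0 : (0:ℝ) ≤ W := hvnn _
  have hYpos : W < value vv Y := by
    obtain ⟨g0, hg0⟩ := hne
    exact lt_of_lt_of_le (hb g0 hg0) (hmono (Finset.erase_subset _ _))
  -- Deviation value bounds
  have hF : ∀ (t : ℕ) (ht : t < m), recvA b (modelA b t) = i →
      value vv (insert (⟨t, ht⟩ : Fin m) (modelA b t i)) ≤ W := by
    intro t ht hr
    obtain ⟨w', hdev⟩ := devBid_exists b i ⟨t, ht⟩
    exact le_trans (hmono (dev_F hdev ht rfl hr)) (hW w')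
  have hSG : ∀ (t : ℕ) (ht : t < m), recvA b (modelA b t) = i + 1 →
      value vv (insert (⟨t, ht⟩ : Fin m) (modelA b t (i + 1))) ≤ W ∨
        (bval (b (i + 1)) (Finset.univ \ insert (⟨t, ht⟩ : Fin m) (modelA b t (i + 1))) ≤
            bval (b (i + 1)) (insert (⟨t, ht⟩ : Fin m) (modelA b t (i + 1))) ∧
          value vv (Finset.univ \ insert (⟨t, ht⟩ : Fin m) (modelA b t (i + 1))) ≤ W) := by
    intro t ht hr
    obtain ⟨w', hdev⟩ := devBid_exists b i ⟨t, ht⟩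
    rcases dev_SG hdev ht rfl hr with hsub | ⟨heq, hu⟩
    · exact Or.inl (le_trans (hmono hsub) (hW w'))
    · refine Or.inr ⟨hu, ?_⟩
      rw [← heq]
      exact hW w'
  -- the four-case analysis of an actual step
  have hcases : ∀ (s : ℕ) (hs : s < m),
      (recvA b (modelA b s) = i ∧
        modelA b (s+1) i = insert ⟨s, hs⟩ (modelA b s i) ∧
        modelA b (s+1) (i+1) = modelA b s (i+1)) ∨
      (recvA b (modelA b s) = i ∧
        modelA b (s+1) i = modelA b s (i+1) ∧
        modelA b (s+1) (i+1) = insert ⟨s, hs⟩ (modelA b s i) ∧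
        bval (b (i+1)) (modelA b s (i+1)) <
          bval (b (i+1)) (insert (⟨s, hs⟩ : Fin m) (modelA b s i))) ∨
      (recvA b (modelA b s) = i + 1 ∧
        modelA b (s+1) i = modelA b s i ∧
        modelA b (s+1) (i+1) = insert ⟨s, hs⟩ (modelA b s (i+1))) ∨
      (recvA b (modelA b s) = i + 1 ∧
        modelA b (s+1) i = insert ⟨s, hs⟩ (modelA b s (i+1)) ∧
        modelA b (s+1) (i+1) = modelA b s i ∧
        bval (b (i+1)) (insert (⟨s, hs⟩ : Fin m) (modelA b s (i+1))) <
          bval (b (i+1)) (modelA b s i)) := by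
    intro s hs
    set P := modelA b s with hPdef
    set g : Fin m := ⟨s, hs⟩ with hgdef
    set Q := addA b P g with hQdef
    have hstep : modelA b (s+1) = postA b Q := modelA_succ hs
    rcases fin2_other i (recvA b P) with hr | hr
    · -- receiver i
      have hQi : Q i = insert g (P i) := by rw [hQdef, ← hr]; exact addA_recv P g
      have hQo : Q (i+1) = P (i+1) := by
        rw [hQdef]
        exact addA_other P g (by rw [hr]; exact fin2_add_one_ne i)
      by_cases hmut : mutualA b Q
      · right; left
        have hsw : envies b Q (i+1) i := mutual_envies_snd hmut i
        rw [envies, hQi, hQo] at hsw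
        refine ⟨hr, ?_, ?_, hsw⟩
        · rw [hstep, postA, if_pos hmut]
          show Q (i+1) = P (i+1)
          exact hQo
        · rw [hstep, postA, if_pos hmut]
          show Q (i+1+1) = insert g (P i)
          rw [fin2_add_add, hQi]
      · left
        rw [hstep, postA, if_neg hmut]
        exact ⟨hr, hQi, hQo⟩
    · -- receiver i+1
      have hQo : Q (i+1) = insert g (P (i+1)) := by rw [hQdef, ← hr]; exact addA_recv P g
      have hQi : Q i = P i := by
        rw [hQdef]
        exact addA_other P g (by rw [hr]; exact (fin2_add_one_ne i).symm)
      by_cases hmut : mutualA b Q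
      · right; right; right
        have hsw : envies b Q (i+1) i := mutual_envies_snd hmut i
        rw [envies, hQi, hQo] at hsw
        refine ⟨hr, ?_, ?_, hsw⟩
        · rw [hstep, postA, if_pos hmut]
          show Q (i+1) = insert g (P (i+1))
          exact hQo
        · rw [hstep, postA, if_pos hmut]
          show Q (i+1+1) = P i
          rw [fin2_add_add, hQi]
      · right; right; left
        rw [hstep, postA, if_neg hmut]
        exact ⟨hr, hQi, hQo⟩
  have hfresh : ∀ (s : ℕ) (hs : s < m) (a : Fin 2), (⟨s, hs⟩ : Fin m) ∉ modelA b s a := by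
    intro s hs a hmem
    exact lt_irrefl s (modelA_bound s a _ hmem)
  have hsub1 : ∀ (s : ℕ) (hs : s < m),
      insert (⟨s, hs⟩ : Fin m) (modelA b s i) ⊆ Finset.univ \ modelA b s (i+1) := by
    intro s hs x hx
    rcases Finset.mem_insert.1 hx with rfl | hx
    · exact Finset.mem_sdiff.2 ⟨Finset.mem_univ _, hfresh s hs (i+1)⟩
    · exact Finset.mem_sdiff.2 ⟨Finset.mem_univ _, modelA_disj' i hx⟩
  have hsub2 : ∀ (s : ℕ) (hs : s < m),
      modelA b s i ⊆ Finset.univ \ insert (⟨s, hs⟩ : Fin m) (modelA b s (i+1)) := by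
    intro s hs x hx
    refine Finset.mem_sdiff.2 ⟨Finset.mem_univ _, ?_⟩
    intro hmem
    rcases Finset.mem_insert.1 hmem with rfl | hmem
    · exact hfresh s hs i hx
    · exact modelA_disj' i hx hmem
  -- C/D lemmas
  have hCD : ∀ s : ℕ, value vv (modelA b s i) ≤ W ∧
      (value vv (modelA b s (i+1)) ≤ W ∨
        bval (b (i+1)) (Finset.univ \ modelA b s (i+1)) ≤
          bval (b (i+1)) (modelA b s (i+1))) := by
    intro s
    induction s with
    | zero =>
      constructor
      · show value vv (∅ : Finset (Fin m)) ≤ W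
        rw [value, Finset.sum_empty]
        exact hW0
      · left
        show value vv (∅ : Finset (Fin m)) ≤ W
        rw [value, Finset.sum_empty]
        exact hW0
    | succ s ih =>
      by_cases hs : s < m
      · rcases hcases s hs with ⟨hr, hi, ho⟩ | ⟨hr, hi, ho, hsw⟩ |
          ⟨hr, hi, ho⟩ | ⟨hr, hi, ho, hsw⟩
        · exact ⟨by rw [hi]; exact hF s hs hr, by rw [ho]; exact ih.2⟩
        · constructor
          · rw [hi]
            rcases ih.2 with h | hdom
            · exact h
            · exfalso
              have h1 := bval_mono (b (i+1)) (hsub1 s hs)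
              linarith
          · rw [ho]
            exact Or.inl (hF s hs hr)
        · refine ⟨by rw [hi]; exact ih.1, ?_⟩
          rw [ho]
          rcases hSG s hs hr with h | ⟨h1, h2⟩
          · exact Or.inl h
          · exact Or.inr h1
        · constructor
          · rw [hi]
            rcases hSG s hs hr with h | ⟨h1, h2⟩
            · exact h
            · exfalso
              have h3 := bval_mono (b (i+1)) (hsub2 s hs)
              linarith
          · rw [ho]
            exact Or.inl ih.1
      · rw [modelA_stall hs]
        exact ih
  -- contradiction helpers
  have hAAc : ∀ D : Finset (Fin m), D ⊆ Y → value vv (Y \ D) = 0 →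
      value vv D ≤ W → False := by
    intro D hsub h0 hDW
    have hsd := Finset.sum_sdiff (f := vv) hsub
    have : value vv Y = value vv (Y \ D) + value vv D := hsd.symm
    rw [h0, zero_add] at this
    linarith
  have hBBc : ∀ (D : Finset (Fin m)) (γ' : Fin m), D ⊆ Y → γ' ∈ Y → γ' ∉ D →
      value vv ((Y \ D).erase γ') = 0 → value vv D ≤ W → False := by
    intro D γ' hsub hγY hγD h0 hDW
    have hsub' : D ⊆ Y.erase γ' := fun x hx =>
      Finset.mem_erase.2 ⟨fun he => hγD (he ▸ hx), hsub hx⟩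
    have hset : (Y.erase γ') \ D = (Y \ D).erase γ' := by
      ext x
      simp only [Finset.mem_sdiff, Finset.mem_erase]
      tauto
    have hsd := Finset.sum_sdiff (f := vv) hsub'
    rw [hset] at hsd
    have hb' := hb γ' hγY
    have : value vv (Y.erase γ') = value vv ((Y \ D).erase γ') + value vv D := hsd.symm
    rw [h0, zero_add] at this
    linarith
  have hgrab : ∀ D : Finset (Fin m), D ⊆ Y →
      value vv (Finset.univ \ D) = W + value vv (Y \ D) := by
    intro D hsub
    have hXsub : modelA b m i ⊆ Finset.univ \ D := by
      intro x hx
      exact Finset.mem_sdiff.2 ⟨Finset.mem_univ _, fun hxD => modelA_disj' i hx (hsub hxD)⟩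
    have hXc : modelA b m i = Finset.univ \ Y := pile_compl b i
    have hset : (Finset.univ \ D) \ modelA b m i = Y \ D := by
      rw [hXc]
      ext x
      simp only [Finset.mem_sdiff, Finset.mem_univ, true_and, not_not]
      tauto
    have hsd := Finset.sum_sdiff (f := vv) hXsub
    rw [hset] at hsd
    have heq : value vv (Finset.univ \ D) =
        value vv (Y \ D) + value vv (modelA b m i) := hsd.symm
    rw [hWdef]
    linarith [heq]
  -- the H induction
  have hH : ∀ s : ℕ,
      ((modelA b s (i+1) ⊆ Y ∧ value vv (Y \ modelA b s (i+1)) = 0) → False) ∧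
      (∀ γ' : Fin m, (modelA b s (i+1) ⊆ Y ∧ γ' ∈ Y ∧ γ' ∉ modelA b s (i+1) ∧
        value vv ((Y \ modelA b s (i+1)).erase γ') = 0) → False) := by
    intro s
    induction s with
    | zero =>
      constructor
      · rintro ⟨-, h0⟩
        have hY0 : value vv (Y \ (∅ : Finset (Fin m))) = value vv Y := by
          rw [Finset.sdiff_empty]
        rw [show modelA b 0 (i+1) = (∅ : Finset (Fin m)) from rfl, hY0] at h0
        linarith
      · intro γ' hyp
        obtain ⟨-, hγY, -, h0⟩ := hyp
        rw [show modelA b 0 (i+1) = (∅ : Finset (Fin m)) from rfl, Finset.sdiff_empty] at h0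
        have hb' := hb _ hγY
        linarith
    | succ s ih =>
      by_cases hs : s < m
      · rcases hcases s hs with ⟨hr, hi, ho⟩ | ⟨hr, hi, ho, hsw⟩ |
          ⟨hr, hi, ho⟩ | ⟨hr, hi, ho, hsw⟩
        · -- receiver i, no swap : D unchanged
          rw [ho]
          exact ih
        · -- receiver i, swap : new D = insert g (C_s), bounded by F
          constructor
          · rintro ⟨hsubY, h0⟩
            rw [ho] at hsubY h0
            exact hAAc _ hsubY h0 (hF s hs hr)
          · rintro γ' ⟨hsubY, hγY, hγD, h0⟩
            rw [ho] at hsubY hγD h0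
            exact hBBc _ γ' hsubY hγY hγD h0 (hF s hs hr)
        · -- receiver i+1, no swap
          have hAAs : (modelA b (s+1) (i+1) ⊆ Y ∧
              value vv (Y \ modelA b (s+1) (i+1)) = 0) → False := by
            rintro ⟨hsubY, h0⟩
            rw [ho] at hsubY h0
            refine ih.2 ⟨s, hs⟩ ⟨?_, ?_, ?_, ?_⟩
            · exact (Finset.subset_insert _ _).trans hsubY
            · exact hsubY (Finset.mem_insert_self _ _)
            · exact hfresh s hs (i+1)
            · rw [← sdiff_insert_erase]
              exact h0
          refine ⟨hAAs, ?_⟩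
          rintro γ' ⟨hsubY, hγY, hγD, h0⟩
          rw [ho] at hsubY hγD h0
          rcases hSG s hs hr with h | ⟨h1, h2⟩
          · exact hBBc _ γ' hsubY hγY hγD h0 h
          · -- grab branch: vv γ' = 0, reduce to AA (s+1)
            have hgr := hgrab _ hsubY
            have hmem : γ' ∈ Y \ insert (⟨s, hs⟩ : Fin m) (modelA b s (i+1)) :=
              Finset.mem_sdiff.2 ⟨hγY, hγD⟩
            have hdec := Finset.add_sum_erase _ vv hmem
            have hge : (0:ℝ) ≤ vv γ' := hvv γ'
            have hgnn : (0:ℝ) ≤ value vv (Y \ insert (⟨s, hs⟩ : Fin m)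
              (modelA b s (i+1))) := hvnn _
            have hzero : value vv (Y \ insert (⟨s, hs⟩ : Fin m)
                (modelA b s (i+1))) = 0 := by
              have : value vv (Y \ insert (⟨s, hs⟩ : Fin m) (modelA b s (i+1))) ≤ 0 := by
                linarith
              linarith
            refine hAAs ⟨?_, ?_⟩
            · rw [ho]; exact hsubY
            · rw [ho]; exact hzero
        · -- receiver i+1, swap : new D = C_s, bounded by CD
          constructor
          · rintro ⟨hsubY, h0⟩
            rw [ho] at hsubY h0
            exact hAAc _ hsubY h0 (hCD s).1
          · rintro γ' ⟨hsubY, hγY, hγD, h0⟩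
            rw [ho] at hsubY hγD h0
            exact hBBc _ γ' hsubY hγY hγD h0 (hCD s).1
      · rw [modelA_stall hs]
        exact ih
  exact (hH m).1 ⟨Finset.Subset.refl Y, by rw [Finset.sdiff_self, value, Finset.sum_empty]⟩

end ECEAux

/-- For any instance with exactly 2 agents whose true valuations are
additive, and any bid profile in which agent `i`'s bid is a best response to the other
agent's bid, the allocation produced by Standard-E-C-E is EF1 from agent `i`'s
perspective with respect to agent `i`'s true valuation. -/
theorem standard_two_best_response_EF1 {m : ℕ} (v : Fin 2 → Fin m → ℝ)
    (hv : ∀ i g, 0 ≤ v i g) (b : Fin 2 → Bid m) (i : Fin 2)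
    (hbr : BestResponse Standard (v i) b i) :
    EF1From 1 (v i) (Standard b) i := by
  intro j₀ hj₀
  rcases ECEAux.fin2_other i j₀ with rfl | rfl
  · obtain ⟨g, hg⟩ := hj₀
    refine ⟨g, hg, ?_⟩
    rw [one_mul]
    exact Finset.sum_le_sum_of_subset_of_nonneg (Finset.erase_subset _ _)
      fun g' _ _ => hv _ g'
  · by_contra hno
    push_neg at hno
    rw [ECEAux.Standard_eq] at hno hj₀
    refine ECEAux.main_contra b i (v i) (hv i) ?_ hj₀ ?_
    · intro w'
      have := hbr w'
      rwa [ECEAux.Standard_eq, ECEAux.Standard_eq] at this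
    · intro g hg
      have := hno g hg
      rwa [one_mul] at this
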